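/- Let G be a graph on an even number 2r of vertices. If G has a matching of the form {vx, wy} (two disjoint edges) such that G − {v, w, x, y} has a connected component with an odd number of vertices, then G has a maximal matching of size less than r. -/

import Mathlib

open SimpleGraph

/-- A matching of a simple graph, given as a set of edges: each edge belongs to the
graph, and distinct edges of the matching share no vertex. -/
def EdgeMatching {V : Type*} (G : SimpleGraph V) (M : Set (Sym2 V)) : Prop :=
  M ⊆ G.edgeSet ∧ ∀ e ∈ M, ∀ f ∈ M, e ≠ f → ∀ v : V, v ∈ e → v ∉ f

/-- The set of vertices covered by a set of edges. -/
def mCover {V : Type*} (M : Set (Sym2 V)) : Set V := {v | ∃ e ∈ M, v ∈ e}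

/-- A maximal matching: a matching to which no edge of the graph can be added. -/
def MaximalEdgeMatching {V : Type*} (G : SimpleGraph V) (M : Set (Sym2 V)) : Prop :=
  EdgeMatching G M ∧ ∀ e ∈ G.edgeSet, EdgeMatching G (insert e M) → e ∈ M

lemma EdgeMatching.mono {V : Type*} {G : SimpleGraph V} {M N : Set (Sym2 V)}
    (h : EdgeMatching G M) (hNM : N ⊆ M) : EdgeMatching G N :=
  ⟨hNM.trans h.1, fun e he f hf => h.2 e (hNM he) f (hNM hf)⟩

lemma mCover_insert {V : Type*} (e : Sym2 V) (M : Set (Sym2 V)) :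
    mCover (insert e M) = {a | a ∈ e} ∪ mCover M := by
  ext u
  simp only [mCover, Set.mem_setOf_eq, Set.mem_union, Set.mem_insert_iff]
  constructor
  · rintro ⟨f, (rfl | hf), hu⟩
    · exact Or.inl hu
    · exact Or.inr ⟨f, hf, hu⟩
  · rintro (hu | ⟨f, hf, hu⟩)
    · exact ⟨e, Or.inl rfl, hu⟩
    · exact ⟨f, Or.inr hf, hu⟩

lemma mCover_card {V : Type*} [Finite V] {G : SimpleGraph V} {M : Set (Sym2 V)}
    (hM : EdgeMatching G M) : (mCover M).ncard = 2 * M.ncard := by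
  have hfin : M.Finite := Set.toFinite M
  revert hM
  refine Set.Finite.induction_on (motive := fun M _ => EdgeMatching G M → (mCover M).ncard = 2 * M.ncard)
    M hfin (by simp [mCover]) ?_
  intro e M heM hMfin ih hM
  have hMat : EdgeMatching G M := hM.mono (Set.subset_insert _ _)
  have heE : e ∈ G.edgeSet := hM.1 (Set.mem_insert _ _)
  revert heM hM heE
  induction e using Sym2.ind with
  | _ a b =>
  intro heM hM heE
  have hab : a ≠ b := (G.mem_edgeSet.mp heE).ne
  have hset : {u | u ∈ s(a, b)} = ({a, b} : Set V) := by
    ext u; simp [Sym2.mem_iff]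
  have hdisj : Disjoint {u | u ∈ s(a, b)} (mCover M) := by
    rw [Set.disjoint_left]
    rintro u hu ⟨f, hf, huf⟩
    exact hM.2 _ (Set.mem_insert _ _) f (Set.mem_insert_of_mem _ hf)
      (fun h => heM (h ▸ hf)) u hu huf
  rw [mCover_insert, Set.ncard_union_eq hdisj, hset, Set.ncard_pair hab,
    Set.ncard_insert_of_notMem heM, ih hMat]
  ring

lemma exists_maximal_ext {V : Type*} [Finite V] (G : SimpleGraph V) (M0 : Set (Sym2 V))
    (h0 : EdgeMatching G M0) :
    ∃ M, M0 ⊆ M ∧ MaximalEdgeMatching G M := by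
  set S : Set (Set (Sym2 V)) := {N | EdgeMatching G N ∧ M0 ⊆ N} with hS
  have hSfin : S.Finite := (Set.toFinite G.edgeSet).finite_subsets.subset (fun N hN => hN.1.1)
  obtain ⟨M, hMS, hmax⟩ :=
    Set.Finite.exists_maximalFor id S hSfin ⟨M0, h0, subset_rfl⟩
  refine ⟨M, hMS.2, hMS.1, fun e heE hins => ?_⟩
  have hmem : insert e M ∈ S := ⟨hins, hMS.2.trans (Set.subset_insert _ _)⟩
  have heq := hmax hmem (Set.subset_insert _ _)
  simp only [id] at heq
  exact heq (Set.mem_insert _ _)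

/-- if G on 2r vertices has two disjoint edges vx, wy such that
G − {v,w,x,y} has an odd component, then G has a maximal matching of size < r. -/
theorem exists_small_maximal_matching_of_odd_component {V : Type*} [Fintype V]
    (G : SimpleGraph V) (r : ℕ) (hcard : Fintype.card V = 2 * r)
    (v w x y : V) (hvx : G.Adj v x) (hwy : G.Adj w y)
    (hd : v ≠ w ∧ v ≠ y ∧ x ≠ w ∧ x ≠ y)
    (hodd : ∃ c : (G.induce {a : V | a ≠ v ∧ a ≠ w ∧ a ≠ x ∧ a ≠ y}).ConnectedComponent,
      Odd c.supp.ncard) :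
    ∃ M : Set (Sym2 V), MaximalEdgeMatching G M ∧ M.ncard < r := by
  obtain ⟨hvw, hvy, hxw, hxy⟩ := hd
  set S0 : Set V := {a : V | a ≠ v ∧ a ≠ w ∧ a ≠ x ∧ a ≠ y} with hS0
  obtain ⟨c, hoddc⟩ := hodd
  have h0 : EdgeMatching G {s(v, x), s(w, y)} := by
    constructor
    · rintro e he
      rcases he with rfl | rfl
      · exact G.mem_edgeSet.mpr hvx
      · exact G.mem_edgeSet.mpr hwy
    · intro e he f hf hef u hue huf
      rcases he with rfl | rfl <;> rcases hf with rfl | rfl <;>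
        first
        | exact (hef rfl).elim
        | (rw [Sym2.mem_iff] at hue huf;
           rcases hue with rfl | rfl <;> rcases huf with h | h <;> simp_all)
  obtain ⟨M, hsub, hMmax⟩ := exists_maximal_ext G _ h0
  have hM : EdgeMatching G M := hMmax.1
  have hvxM : s(v, x) ∈ M := hsub (Set.mem_insert _ _)
  have hwyM : s(w, y) ∈ M := hsub (by simp)
  refine ⟨M, hMmax, ?_⟩
  set supp' : Set V := Subtype.val '' c.supp with hsupp'
  set F : Set (Sym2 V) := {e | e ∈ M ∧ ∃ u ∈ supp', u ∈ e} with hF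
  have hFM : F ⊆ M := fun e he => he.1
  -- every edge of F has both endpoints in supp'
  have hclosed : ∀ e ∈ F, ∀ u ∈ e, u ∈ supp' := by
    rintro e ⟨heM, z, hz, hze⟩ u hue
    obtain ⟨zs, hzs, rfl⟩ := hz
    obtain ⟨hz1, hz2, hz3, hz4⟩ := zs.2
    obtain ⟨b, hspec⟩ : ∃ b, s((zs : V), b) = e := ⟨_, Sym2.other_spec hze⟩
    have hevx : e ≠ s(v, x) := by
      intro h; rw [h] at hze
      rcases Sym2.mem_iff.mp hze with h' | h' <;> simp_all
    have hewy : e ≠ s(w, y) := by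
      intro h; rw [h] at hze
      rcases Sym2.mem_iff.mp hze with h' | h' <;> simp_all
    have hbS0 : b ∈ S0 := by
      refine ⟨?_, ?_, ?_, ?_⟩
      · rintro rfl
        exact hM.2 e heM _ hvxM hevx b (by rw [← hspec]; simp) (by simp)
      · rintro rfl
        exact hM.2 e heM _ hwyM hewy b (by rw [← hspec]; simp) (by simp)
      · rintro rfl
        exact hM.2 e heM _ hvxM hevx b (by rw [← hspec]; simp) (by simp)
      · rintro rfl
        exact hM.2 e heM _ hwyM hewy b (by rw [← hspec]; simp) (by simp)
    have hadj : G.Adj (zs : V) b := G.mem_edgeSet.mp (by rw [hspec]; exact hM.1 heM)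
    have hadj' : (G.induce S0).Adj zs ⟨b, hbS0⟩ := by
      simp [SimpleGraph.comap, hadj]
    have hbsupp : (⟨b, hbS0⟩ : S0) ∈ c.supp := by
      rw [SimpleGraph.ConnectedComponent.mem_supp_iff] at hzs ⊢
      rw [← hzs]
      exact SimpleGraph.ConnectedComponent.sound hadj'.symm.reachable
    rcases Sym2.mem_iff.mp (hspec ▸ hue) with h | h
    · subst h; exact ⟨zs, hzs, rfl⟩
    · subst h; exact ⟨_, hbsupp, rfl⟩
  have hcovF : mCover F = mCover M ∩ supp' := by
    ext u
    constructor
    · rintro ⟨e, heF, hue⟩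
      exact ⟨⟨e, hFM heF, hue⟩, hclosed e heF u hue⟩
    · rintro ⟨⟨e, heM, hue⟩, husupp⟩
      exact ⟨e, ⟨heM, u, husupp, hue⟩, hue⟩
  have hFmat : EdgeMatching G F := hM.mono hFM
  have heven : (mCover M ∩ supp').ncard = 2 * F.ncard := by
    rw [← hcovF]; exact mCover_card hFmat
  have hsuppcard : supp'.ncard = c.supp.ncard :=
    Set.ncard_image_of_injective _ Subtype.val_injective
  have hneq : mCover M ∩ supp' ≠ supp' := by
    intro h
    rw [h, hsuppcard] at heven
    obtain ⟨k, hk⟩ := hoddc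
    omega
  obtain ⟨u, husupp, hucov⟩ :=
    Set.exists_of_ssubset (ssubset_of_subset_of_ne Set.inter_subset_right hneq)
  have hunc : u ∉ mCover M := fun h => hucov ⟨h, husupp⟩
  have hss : mCover M ⊂ Set.univ :=
    Set.ssubset_univ_iff.mpr (fun h => hunc (h ▸ Set.mem_univ u))
  have hlt : (mCover M).ncard < (Set.univ : Set V).ncard :=
    Set.ncard_lt_ncard hss Set.finite_univ
  rw [Set.ncard_univ, Nat.card_eq_fintype_card, hcard] at hlt
  have hMc := mCover_card hM
  omega
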